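/- Branching power formula: for all n ≥ 0, B_∨^n(leaf) = Σ_{|τ|=n} ω(τ)·τ, where B_∨ is the linear branching operator on the free vector space of rooted planar binary trees that sends a tree τ to the sum of all trees obtained by attaching a single internal vertex (a cherry ∨) at one of the free leaves of τ. -/

import Mathlib

/-- Rooted planar binary trees. -/
inductive PBTree : Type
  | leaf : PBTree
  | graft : PBTree → PBTree → PBTree
  deriving DecidableEq

namespace PBTree

/-- The grade of a tree: its number of internal vertices. -/
def grade : PBTree → ℕ
  | leaf => 0
  | graft t1 t2 => grade t1 + grade t2 + 1

/-- The weight character ω. -/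
def weight : PBTree → ℕ
  | leaf => 1
  | graft t1 t2 => Nat.choose (grade t1 + grade t2) (grade t1) * weight t1 * weight t2

/-- The branching operator on a single tree: attach a cherry `∨` successively and
additively at each free leaf.  Values in the free ℚ-vector space `PBTree →₀ ℚ`. -/
noncomputable def Bv : PBTree → (PBTree →₀ ℚ)
  | leaf => Finsupp.single (graft leaf leaf) 1
  | graft t1 t2 =>
      (Bv t1).sum (fun σ a => Finsupp.single (graft σ t2) a)
        + (Bv t2).sum (fun σ a => Finsupp.single (graft t1 σ) a)

/-- The linear extension of the branching operator `B_∨` to the free vector space. -/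
noncomputable def BvLin (f : PBTree →₀ ℚ) : PBTree →₀ ℚ :=
  f.sum fun τ a => a • Bv τ

/-- The bilinear extension of grafting to the free vector space. -/
noncomputable def graftLin (f g : PBTree →₀ ℚ) : PBTree →₀ ℚ :=
  f.sum fun τ1 a => g.sum fun τ2 b => Finsupp.single (graft τ1 τ2) (a * b)

/-- The grading operator `G`, sending a tree `τ` of positive grade to `(1/|τ|)·τ`,
extended linearly. -/
noncomputable def Gop (f : PBTree →₀ ℚ) : PBTree →₀ ℚ :=
  f.sum fun τ a => Finsupp.single τ ((grade τ : ℚ)⁻¹ * a)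

end PBTree

namespace PBTree

lemma BvLin_single (τ : PBTree) (a : ℚ) : BvLin (Finsupp.single τ a) = a • Bv τ :=
  Finsupp.sum_single_index (zero_smul _ _)

lemma BvLin_add (f g : PBTree →₀ ℚ) : BvLin (f + g) = BvLin f + BvLin g :=
  Finsupp.sum_add_index' (fun _ => zero_smul _ _) (fun _ b c => add_smul b c _)

lemma BvLin_iterate_add (n : ℕ) (f g : PBTree →₀ ℚ) :
    BvLin^[n] (f + g) = BvLin^[n] f + BvLin^[n] g := by
  induction n generalizing f g with
  | zero => rfl
  | succ n ih =>
    rw [Function.iterate_succ_apply, Function.iterate_succ_apply,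
      Function.iterate_succ_apply, BvLin_add, ih]

lemma graftLin_single_left (τ : PBTree) (a : ℚ) (g : PBTree →₀ ℚ) :
    graftLin (Finsupp.single τ a) g
      = g.sum fun σ b => Finsupp.single (graft τ σ) (a * b) := by
  unfold graftLin
  exact Finsupp.sum_single_index (by simp)

lemma graftLin_single_right (f : PBTree →₀ ℚ) (σ : PBTree) (b : ℚ) :
    graftLin f (Finsupp.single σ b)
      = f.sum fun τ a => Finsupp.single (graft τ σ) (a * b) := by
  unfold graftLin
  refine Finset.sum_congr rfl fun τ _ => ?_
  exact Finsupp.sum_single_index (by simp)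

lemma graftLin_zero_left (g : PBTree →₀ ℚ) : graftLin 0 g = 0 :=
  Finsupp.sum_zero_index

lemma graftLin_zero_right (f : PBTree →₀ ℚ) : graftLin f 0 = 0 := by
  unfold graftLin
  simp [Finsupp.sum_zero_index]

lemma graftLin_add_left (f f' g : PBTree →₀ ℚ) :
    graftLin (f + f') g = graftLin f g + graftLin f' g := by
  unfold graftLin
  refine Finsupp.sum_add_index' (fun τ => by simp) (fun τ b c => ?_)
  simp only [add_mul, Finsupp.single_add, Finsupp.sum_add]

lemma graftLin_add_right (f g g' : PBTree →₀ ℚ) :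
    graftLin f (g + g') = graftLin f g + graftLin f g' := by
  unfold graftLin
  rw [← Finsupp.sum_add]
  refine Finset.sum_congr rfl fun τ _ => ?_
  simp only
  refine Finsupp.sum_add_index' (fun σ => by simp) (fun σ b c => ?_)
  simp only [mul_add, Finsupp.single_add]

lemma graftLin_smul_left (c : ℚ) (f g : PBTree →₀ ℚ) :
    graftLin (c • f) g = c • graftLin f g := by
  unfold graftLin
  rw [Finsupp.sum_smul_index (fun τ => by simp), Finsupp.smul_sum]
  refine Finset.sum_congr rfl fun τ _ => ?_
  simp only [Finsupp.smul_sum, Finsupp.smul_single, smul_eq_mul, mul_assoc]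

lemma graftLin_smul_right (c : ℚ) (f g : PBTree →₀ ℚ) :
    graftLin f (c • g) = c • graftLin f g := by
  unfold graftLin
  rw [Finsupp.smul_sum]
  refine Finset.sum_congr rfl fun τ _ => ?_
  simp only
  rw [Finsupp.sum_smul_index (fun σ => by simp), Finsupp.smul_sum]
  refine Finset.sum_congr rfl fun σ _ => ?_
  simp only [Finsupp.smul_single, smul_eq_mul]
  congr 1
  ring

lemma Bv_graft (t1 t2 : PBTree) :
    Bv (graft t1 t2)
      = graftLin (Bv t1) (Finsupp.single t2 1) + graftLin (Finsupp.single t1 1) (Bv t2) := by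
  rw [graftLin_single_right, graftLin_single_left]
  show Bv (graft t1 t2) = _
  rw [Bv]
  simp [mul_one, one_mul]

lemma leibniz_single_single (τ σ : PBTree) (a b : ℚ) :
    BvLin (graftLin (Finsupp.single τ a) (Finsupp.single σ b))
      = graftLin (BvLin (Finsupp.single τ a)) (Finsupp.single σ b)
        + graftLin (Finsupp.single τ a) (BvLin (Finsupp.single σ b)) := by
  rw [graftLin_single_left, Finsupp.sum_single_index (by simp),
    BvLin_single, BvLin_single, BvLin_single, Bv_graft]
  have h1 : (Finsupp.single τ a : PBTree →₀ ℚ) = a • Finsupp.single τ 1 := by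
    rw [Finsupp.smul_single, smul_eq_mul, mul_one]
  have h2 : (Finsupp.single σ b : PBTree →₀ ℚ) = b • Finsupp.single σ 1 := by
    rw [Finsupp.smul_single, smul_eq_mul, mul_one]
  rw [smul_add, graftLin_smul_left, h2, graftLin_smul_right, h1,
    graftLin_smul_left, graftLin_smul_right]
  simp only [smul_smul]
  try rw [mul_comm b a]

lemma leibniz_single (τ : PBTree) (a : ℚ) (g : PBTree →₀ ℚ) :
    BvLin (graftLin (Finsupp.single τ a) g)
      = graftLin (BvLin (Finsupp.single τ a)) g
        + graftLin (Finsupp.single τ a) (BvLin g) := by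
  induction g using Finsupp.induction₂ with
  | zero => simp [graftLin_zero_right, BvLin, Finsupp.sum_zero_index]
  | add_single σ b g _ _ ih =>
    rw [graftLin_add_right, BvLin_add, ih, BvLin_add, graftLin_add_right,
      graftLin_add_right, leibniz_single_single]
    abel

/-- Leibniz rule for the branching operator. -/
lemma leibniz (f g : PBTree →₀ ℚ) :
    BvLin (graftLin f g) = graftLin (BvLin f) g + graftLin f (BvLin g) := by
  induction f using Finsupp.induction₂ with
  | zero => simp [graftLin_zero_left, BvLin, Finsupp.sum_zero_index]
  | add_single τ a f _ _ ih =>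
    rw [graftLin_add_left, BvLin_add, ih, BvLin_add, graftLin_add_left,
      graftLin_add_left, leibniz_single]
    abel

/-- Pascal-style recombination of binomial-weighted sums. -/
lemma pascal_recomb {M : Type*} [AddCommMonoid M] (n : ℕ) (F : ℕ → ℕ → M) :
    ∑ i ∈ Finset.range (n + 2), (n + 1).choose i • F i (n + 1 - i)
      = (∑ i ∈ Finset.range (n + 1), n.choose i • F (i + 1) (n - i))
        + ∑ i ∈ Finset.range (n + 1), n.choose i • F i (n + 1 - i) := by
  rw [Finset.sum_range_succ' (fun i => (n + 1).choose i • F i (n + 1 - i)) (n + 1)]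
  have step : ∀ i ∈ Finset.range (n + 1),
      (n + 1).choose (i + 1) • F (i + 1) (n + 1 - (i + 1))
        = n.choose i • F (i + 1) (n - i) + n.choose (i + 1) • F (i + 1) (n - i) := by
    intro i _
    have h : n + 1 - (i + 1) = n - i := by omega
    rw [h, Nat.choose_succ_succ, add_smul]
  rw [Finset.sum_congr rfl step, Finset.sum_add_distrib]
  have hB : ∑ i ∈ Finset.range (n + 1), n.choose (i + 1) • F (i + 1) (n - i)
        + (n + 1).choose 0 • F 0 (n + 1 - 0)
      = ∑ i ∈ Finset.range (n + 1), n.choose i • F i (n + 1 - i) := by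
    rw [Finset.sum_range_succ (fun i => n.choose (i + 1) • F (i + 1) (n - i)) n,
      Nat.choose_succ_self, zero_smul, add_zero,
      Finset.sum_range_succ' (fun i => n.choose i • F i (n + 1 - i)) n]
    simp only [Nat.choose_zero_right, one_smul, Nat.sub_zero]
    congr 1
    refine Finset.sum_congr rfl fun i _ => ?_
    have h : n + 1 - (i + 1) = n - i := by omega
    rw [h]
  rw [add_assoc, hB]

lemma BvLin_iterate_graftLin (n : ℕ) (f g : PBTree →₀ ℚ) :
    BvLin^[n] (graftLin f g)
      = ∑ i ∈ Finset.range (n + 1),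
          (n.choose i) • graftLin (BvLin^[i] f) (BvLin^[n - i] g) := by
  induction n generalizing f g with
  | zero => simp
  | succ n ih =>
    rw [Function.iterate_succ_apply, leibniz, BvLin_iterate_add, ih, ih]
    have key := pascal_recomb n (fun i j => graftLin (BvLin^[i] f) (BvLin^[j] g))
    have e1 : ∑ i ∈ Finset.range (n + 1),
          n.choose i • graftLin (BvLin^[i] (BvLin f)) (BvLin^[n - i] g)
        = ∑ i ∈ Finset.range (n + 1),
          n.choose i • graftLin (BvLin^[i + 1] f) (BvLin^[n - i] g) :=
      Finset.sum_congr rfl fun i _ => by rw [Function.iterate_succ_apply]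
    have e2 : ∑ i ∈ Finset.range (n + 1),
          n.choose i • graftLin (BvLin^[i] f) (BvLin^[n - i] (BvLin g))
        = ∑ i ∈ Finset.range (n + 1),
          n.choose i • graftLin (BvLin^[i] f) (BvLin^[n + 1 - i] g) := by
      refine Finset.sum_congr rfl fun i hi => ?_
      have h : n + 1 - i = n - i + 1 := by
        have := Finset.mem_range.mp hi; omega
      rw [h, Function.iterate_succ_apply]
    rw [e1, e2]
    exact key.symm

lemma Bv_apply_leaf (σ : PBTree) : Bv σ leaf = 0 := by
  cases σ with
  | leaf => simp [Bv, Finsupp.single_apply]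
  | graft t1 t2 =>
    rw [Bv, Finsupp.add_apply, Finsupp.sum_apply, Finsupp.sum_apply]
    simp [Finsupp.single_apply]

lemma BvLin_apply_leaf (f : PBTree →₀ ℚ) : BvLin f leaf = 0 := by
  unfold BvLin
  rw [Finsupp.sum_apply]
  apply Finset.sum_eq_zero
  intro τ _
  simp [Bv_apply_leaf]

lemma graftLin_apply (f g : PBTree →₀ ℚ) (u1 u2 : PBTree) :
    graftLin f g (graft u1 u2) = f u1 * g u2 := by
  unfold graftLin
  rw [Finsupp.sum_apply]
  have h1 : (f.sum fun τ1 a =>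
        (g.sum fun τ2 b => Finsupp.single (graft τ1 τ2) (a * b)) (graft u1 u2))
      = f.sum fun τ1 a => (if τ1 = u1 then a else 0) * g u2 := by
    refine Finset.sum_congr rfl fun τ1 _ => ?_
    simp only
    rw [Finsupp.sum_apply]
    have h2 : (g.sum fun τ2 b => (Finsupp.single (graft τ1 τ2) (f τ1 * b)) (graft u1 u2))
        = g.sum fun τ2 b => (if τ1 = u1 then f τ1 else 0) * (if τ2 = u2 then b else 0) := by
      refine Finset.sum_congr rfl fun τ2 _ => ?_
      simp only [Finsupp.single_apply, graft.injEq]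
      split_ifs <;> simp_all
    rw [h2, ← Finsupp.mul_sum]
    congr 1
    rw [Finsupp.sum_ite_eq']
    split_ifs with h
    · rfl
    · exact (Finsupp.notMem_support_iff.mp h).symm
  rw [h1]
  have h3 : (fun (τ1 : PBTree) (a : ℚ) => (if τ1 = u1 then a else 0) * g u2)
      = fun τ1 a => if τ1 = u1 then a * g u2 else 0 := by
    funext τ1 a
    split_ifs <;> simp
  rw [h3, Finsupp.sum_ite_eq']
  split_ifs with h
  · rfl
  · rw [Finsupp.notMem_support_iff.mp h, zero_mul]

end PBTree

open PBTree in
/-- Branching power formula. -/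
theorem branching_power_formula (n : ℕ) (τ : PBTree) :
    (BvLin^[n] (Finsupp.single PBTree.leaf 1)) τ
      = if grade τ = n then (weight τ : ℚ) else 0 := by
  induction n using Nat.strong_induction_on generalizing τ with
  | _ n ih =>
    cases τ with
    | leaf =>
      cases n with
      | zero => simp [Finsupp.single_apply, PBTree.grade, PBTree.weight]
      | succ m =>
        rw [Function.iterate_succ_apply', BvLin_apply_leaf]
        simp [PBTree.grade]
    | graft u1 u2 =>
      cases n with
      | zero => simp [Finsupp.single_apply, PBTree.grade]
      | succ m =>
        have hδ : BvLin (Finsupp.single PBTree.leaf (1 : ℚ))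
            = graftLin (Finsupp.single PBTree.leaf 1) (Finsupp.single PBTree.leaf 1) := by
          rw [BvLin_single, one_smul, graftLin_single_left,
            Finsupp.sum_single_index (by simp), mul_one]
          rw [Bv]
        rw [Function.iterate_succ_apply, hδ, BvLin_iterate_graftLin,
          Finset.sum_apply']
        have hterm : ∀ i ∈ Finset.range (m + 1),
            ((m.choose i) • graftLin (BvLin^[i] (Finsupp.single PBTree.leaf 1))
                (BvLin^[m - i] (Finsupp.single PBTree.leaf 1))) (graft u1 u2)
              = (m.choose i : ℚ) * ((if u1.grade = i then (weight u1 : ℚ) else 0)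
                  * (if u2.grade = m - i then (weight u2 : ℚ) else 0)) := by
          intro i hi
          have hi' := Finset.mem_range.mp hi
          rw [Finsupp.smul_apply, graftLin_apply, ih i (by omega), ih (m - i) (by omega)]
          rw [nsmul_eq_mul]
        rw [Finset.sum_congr rfl hterm]
        by_cases h : u1.grade + u2.grade = m
        · have hmem : u1.grade ∈ Finset.range (m + 1) := Finset.mem_range.mpr (by omega)
          rw [Finset.sum_eq_single_of_mem (u1.grade) hmem (fun i _ hne => by
            rw [if_neg (fun hh => hne (hh.symm)), zero_mul, mul_zero])]
          have h2 : u2.grade = m - u1.grade := by omega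
          rw [if_pos rfl, if_pos h2]
          have hg : (graft u1 u2).grade = m + 1 := by simp [PBTree.grade]; omega
          rw [if_pos hg]
          show (m.choose (u1.grade) : ℚ) * _ = _
          rw [PBTree.weight]
          push_cast
          rw [h]
          ring
        · have hg : (graft u1 u2).grade ≠ m + 1 := by simp [PBTree.grade]; omega
          rw [if_neg hg]
          apply Finset.sum_eq_zero
          intro i hi
          have hi' := Finset.mem_range.mp hi
          by_cases h1 : u1.grade = i
          · by_cases h2 : u2.grade = m - i
            · exfalso; omega
            · rw [if_neg h2, mul_zero, mul_zero]
          · rw [if_neg h1, zero_mul, mul_zero]
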